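/- arXiv:1809.06091 — 5 statements merged into one kernel-verified Lean document; each statement's English description precedes it below -/
import Mathlib

section
/- Let H be a complex Hilbert space and let a, b be bounded linear operators on H with 0 ≤ a ≤ b (that is, a is positive and b − a is positive). Then there exists a bounded operator c on H with ‖c‖ ≤ 1 such that a = c b c*. -/
set_option synthInstance.maxHeartbeats 1000000
set_option maxHeartbeats 2000000

open ContinuousLinearMap

/-- If `0 ≤ a ≤ b` as bounded operators on a complex Hilbert space (Loewner order),
then there exists a contraction `c` with `a = c b c*`. -/
theorem exists_contraction_conj_of_le {H : Type*} [NormedAddCommGroup H]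
    [InnerProductSpace ℂ H] [CompleteSpace H]
    (a b : H →L[ℂ] H) (ha : 0 ≤ a) (hab : a ≤ b) :
    ∃ c : H →L[ℂ] H, ‖c‖ ≤ 1 ∧
      a = c ∘L b ∘L (ContinuousLinearMap.adjoint c) := by
  have hb : 0 ≤ b := ha.trans hab
  set sa := CFC.sqrt a with hsa_def
  set sb := CFC.sqrt b with hsb_def
  have hsa0 : 0 ≤ sa := CFC.sqrt_nonneg a
  have hsb0 : 0 ≤ sb := CFC.sqrt_nonneg b
  have hsaa : sa * sa = a := CFC.sqrt_mul_sqrt_self a ha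
  have hsbb : sb * sb = b := CFC.sqrt_mul_sqrt_self b hb
  have hsa_sa : IsSelfAdjoint sa := IsSelfAdjoint.of_nonneg hsa0
  have hsb_sa : IsSelfAdjoint sb := IsSelfAdjoint.of_nonneg hsb0
  have key : ∀ (s t : H →L[ℂ] H), IsSelfAdjoint s → s * s = t →
      ∀ x : H, RCLike.re (@inner ℂ _ _ (t x) x) = ‖s x‖ ^ 2 := by
    intro s t hs hst x
    rw [← hst, ContinuousLinearMap.mul_apply]
    nth_rewrite 1 [← hs.adjoint_eq]
    rw [adjoint_inner_left]
    exact inner_self_eq_norm_sq _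
  have hnorm : ∀ x : H, ‖sa x‖ ≤ ‖sb x‖ := by
    intro x
    have h1 : ‖sa x‖ ^ 2 ≤ ‖sb x‖ ^ 2 := by
      rw [← key sa a hsa_sa hsaa x, ← key sb b hsb_sa hsbb x]
      have := (hab : (b - a).IsPositive).inner_nonneg_left x
      rw [sub_apply, inner_sub_left] at this
      have := (Complex.nonneg_iff.mp this).1
      rw [Complex.sub_re, sub_nonneg] at this
      exact this
    have := Real.sqrt_le_sqrt h1
    rwa [Real.sqrt_sq (norm_nonneg _), Real.sqrt_sq (norm_nonneg _)] at this
  -- kernel inclusion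
  have hker : LinearMap.ker (sb : H →ₗ[ℂ] H) ≤ LinearMap.ker (sa : H →ₗ[ℂ] H) := by
    intro x hx
    rw [LinearMap.mem_ker] at hx ⊢
    have h := hnorm x
    rw [show (sb : H →ₗ[ℂ] H) x = sb x from rfl] at hx
    rw [hx, norm_zero] at h
    exact norm_le_zero_iff.mp h
  set R : Submodule ℂ H := LinearMap.range (sb : H →ₗ[ℂ] H) with hR_def
  let d₀ : R →ₗ[ℂ] H :=
    ((LinearMap.ker (sb : H →ₗ[ℂ] H)).liftQ (sa : H →ₗ[ℂ] H) hker).comp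
      (LinearMap.quotKerEquivRange (sb : H →ₗ[ℂ] H)).symm.toLinearMap
  have hd₀ : ∀ x : H, d₀ ⟨sb x, LinearMap.mem_range_self _ x⟩ = sa x := by
    intro x
    simp only [d₀, LinearMap.comp_apply, LinearEquiv.coe_toLinearMap]
    rw [show (⟨sb x, LinearMap.mem_range_self _ x⟩ : R)
        = ⟨(sb : H →ₗ[ℂ] H) x, LinearMap.mem_range_self _ x⟩ from rfl,
      LinearMap.quotKerEquivRange_symm_apply_image, Submodule.mkQ_apply,
      Submodule.liftQ_apply]
    rfl
  have hd₀bound : ∀ y : R, ‖d₀ y‖ ≤ 1 * ‖(y : H)‖ := by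
    rintro ⟨y, hy⟩
    obtain ⟨x, rfl⟩ := hy
    rw [one_mul]
    calc ‖d₀ ⟨(sb : H →ₗ[ℂ] H) x, _⟩‖ = ‖sa x‖ := congrArg norm (hd₀ x)
      _ ≤ ‖sb x‖ := hnorm x
      _ = ‖((sb : H →ₗ[ℂ] H) x : H)‖ := rfl
  let d₁ : R →L[ℂ] H := LinearMap.mkContinuous d₀ 1 hd₀bound
  set K : Submodule ℂ H := R.topologicalClosure with hK_def
  have hRK : R ≤ K := Submodule.le_topologicalClosure R
  let e : R →L[ℂ] K := LinearMap.mkContinuous (Submodule.inclusion hRK) 1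
    (fun y => by rw [one_mul]; rfl)
  have h_e : ∀ y : R, ‖y‖ ≤ ((1 : NNReal) : ℝ) * ‖e y‖ := fun y => by
    rw [NNReal.coe_one, one_mul]; rfl
  have h_dense : DenseRange e := by
    have hd : Dense (Set.range (Submodule.inclusion hRK)) := by
      refine Topology.IsInducing.subtypeVal.dense_iff.2 fun x => ?_
      convert show (x : H) ∈ closure (R : Set H) from x.prop
      rw [← Set.range_comp]
      exact Set.ext fun y =>
        ⟨by rintro ⟨y, rfl⟩; exact y.prop, fun hy => ⟨⟨y, hy⟩, rfl⟩⟩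
    exact hd
  haveI : CompleteSpace K := (Submodule.isClosed_topologicalClosure R).completeSpace_coe
  have hUI := (ContinuousLinearMap.isUniformEmbedding_of_bound (f := e) h_e).isUniformInducing
  let d₂ : K →L[ℂ] H := d₁.extend e
  have hd₂norm : ‖d₂‖ ≤ 1 := by
    have h1 := d₁.opNorm_extend_le h_dense (N := 1) h_e
    have hd₁ : ‖d₁‖ ≤ 1 := LinearMap.mkContinuous_norm_le _ zero_le_one _
    calc ‖d₂‖ ≤ ((1 : NNReal) : ℝ) * ‖d₁‖ := h1
      _ ≤ 1 := by rw [NNReal.coe_one, one_mul]; exact hd₁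
  set c : H →L[ℂ] H := d₂ ∘L (K.orthogonalProjectionOnto) with hc_def
  have hcnorm : ‖c‖ ≤ 1 := by
    calc ‖c‖ ≤ ‖d₂‖ * ‖K.orthogonalProjectionOnto‖ := ContinuousLinearMap.opNorm_comp_le _ _
      _ ≤ 1 * 1 := mul_le_mul hd₂norm (Submodule.orthogonalProjectionOnto_norm_le K)
          (ContinuousLinearMap.opNorm_nonneg _) zero_le_one
      _ = 1 := one_mul 1
  have hc : c ∘L sb = sa := by
    ext x
    have hmemR : sb x ∈ R := LinearMap.mem_range_self _ x
    have h1 : K.orthogonalProjectionOnto (sb x) = e ⟨sb x, hmemR⟩ := by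
      apply Subtype.ext
      rw [show ((K.orthogonalProjectionOnto (sb x) : K) : H) = sb x from K.starProjection_eq_self_iff.mpr (hRK hmemR)]
      rfl
    calc (c ∘L sb) x = d₂ (K.orthogonalProjectionOnto (sb x)) := rfl
      _ = d₂ (e ⟨sb x, hmemR⟩) := by rw [h1]
      _ = d₁ ⟨sb x, hmemR⟩ := d₁.extend_eq h_dense hUI _
      _ = sa x := hd₀ x
  have hsa_eq : sa = c ∘L sb := hc.symm
  have hsa_eq' : sa = sb ∘L ContinuousLinearMap.adjoint c := by
    have h2 := congrArg ContinuousLinearMap.adjoint hsa_eq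
    rwa [hsa_sa.adjoint_eq, adjoint_comp, hsb_sa.adjoint_eq] at h2
  refine ⟨c, hcnorm, ?_⟩
  calc a = sa ∘L sa := by rw [← hsaa]; rfl
    _ = (c ∘L sb) ∘L (sb ∘L ContinuousLinearMap.adjoint c) := by
        rw [← hsa_eq, ← hsa_eq']
    _ = c ∘L b ∘L ContinuousLinearMap.adjoint c := by
        rw [← hsbb]; ext x; rfl
end

section
/- Let H be a complex Hilbert space and let a, b be bounded linear operators on H with 0 ≤ a ≤ b. Then there exists a partial isometry u on H (i.e. u u* u = u) such that a² ≤ u b² u*. -/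
set_option synthInstance.maxHeartbeats 400000
set_option maxHeartbeats 1000000

open ContinuousLinearMap in
theorem polar_aux {H : Type*} [NormedAddCommGroup H] [InnerProductSpace ℂ H] [CompleteSpace H]
    (x : H →L[ℂ] H) :
    ∃ u : H →L[ℂ] H, u * star u * u = u ∧ u * CFC.sqrt (star x * x) = x := by
  set T : H →L[ℂ] H := CFC.sqrt (star x * x) with hTdef
  have hT : (0 : H →L[ℂ] H) ≤ T := CFC.sqrt_nonneg _
  have hTsa : IsSelfAdjoint T := hT.isSelfAdjoint
  have hT2 : T * T = star x * x := CFC.sqrt_mul_sqrt_self _ (star_mul_self_nonneg x)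
  have hinner : ∀ ξ η : H, (inner ℂ (T ξ) (T η) : ℂ) = inner ℂ (x ξ) (x η) := by
    intro ξ η
    have h1 : T (T η) = (adjoint x) (x η) := by
      have := congrArg (fun (A : H →L[ℂ] H) => A η) hT2
      simpa [ContinuousLinearMap.mul_apply, ContinuousLinearMap.star_eq_adjoint] using this
    calc (inner ℂ (T ξ) (T η) : ℂ) = inner ℂ ((adjoint T) ξ) (T η) := by rw [hTsa.adjoint_eq]
      _ = inner ℂ ξ (T (T η)) := adjoint_inner_left T (T η) ξ
      _ = inner ℂ ξ ((adjoint x) (x η)) := by rw [h1]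
      _ = inner ℂ (x ξ) (x η) := adjoint_inner_right x ξ (x η)
  have hnorm : ∀ ξ : H, ‖T ξ‖ = ‖x ξ‖ := by
    intro ξ
    have h := hinner ξ ξ
    rw [inner_self_eq_norm_sq_to_K, inner_self_eq_norm_sq_to_K] at h
    have h2 : (‖T ξ‖ : ℝ) ^ 2 = ‖x ξ‖ ^ 2 := by exact_mod_cast h
    rw [sq_eq_sq_iff_abs_eq_abs, abs_of_nonneg (norm_nonneg _),
      abs_of_nonneg (norm_nonneg _)] at h2
    exact h2
  have key : ∀ ξ ξ' : H, T ξ = T ξ' → x ξ = x ξ' := by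
    intro ξ ξ' h
    have : ‖x ξ - x ξ'‖ = 0 := by
      rw [← map_sub, ← hnorm, map_sub, sub_eq_zero.mpr h, norm_zero]
    simpa [sub_eq_zero] using norm_eq_zero.mp this
  -- the closure of the range of `T`
  set p : Submodule ℂ H := LinearMap.range (T : H →ₗ[ℂ] H) with hpdef
  set K : Submodule ℂ H := p.topologicalClosure with hKdef
  -- the linear map `T ξ ↦ x ξ` on the range of `T`
  have hmem : ∀ y : p, ∃ ξ : H, T ξ = (y : H) := fun y => y.2
  let f₀ : p →ₗ[ℂ] H :=
    { toFun := fun y => x (hmem y).choose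
      map_add' := by
        intro y z
        have h : T ((hmem y).choose + (hmem z).choose) = ((y + z : p) : H) := by
          rw [map_add, (hmem y).choose_spec, (hmem z).choose_spec]; rfl
        show x (hmem (y + z)).choose = x (hmem y).choose + x (hmem z).choose
        rw [key _ _ ((hmem (y + z)).choose_spec.trans h.symm), map_add]
      map_smul' := by
        intro c y
        have h : T (c • (hmem y).choose) = ((c • y : p) : H) := by
          rw [map_smul, (hmem y).choose_spec]; rfl
        show x (hmem (c • y)).choose = (RingHom.id ℂ) c • x (hmem y).choose
        rw [key _ _ ((hmem (c • y)).choose_spec.trans h.symm), map_smul]; rfl }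
  have hf₀ : ∀ (y : p) (ξ : H), T ξ = (y : H) → f₀ y = x ξ := by
    intro y ξ h
    exact key _ _ ((hmem y).choose_spec.trans h.symm)
  have hf₀norm : ∀ y : p, ‖f₀ y‖ = ‖y‖ := by
    intro y
    show ‖x (hmem y).choose‖ = ‖y‖
    rw [← hnorm, (hmem y).choose_spec]; rfl
  let f : p →L[ℂ] H := f₀.mkContinuous 1 (fun y => by rw [hf₀norm, one_mul])
  -- the inclusion of `p` into its closure `K`
  let e : p →L[ℂ] K :=
    (Submodule.inclusion p.le_topologicalClosure).mkContinuous 1 (fun y => by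
      rw [one_mul]; rfl)
  have he_norm : ∀ y : p, ‖e y‖ = ‖y‖ := fun y => rfl
  have he_isom : Isometry e := AddMonoidHomClass.isometry_of_norm e he_norm
  have h_dense : DenseRange e := by
    intro y
    rw [closure_subtype]
    have himg : ((↑) : K → H) '' Set.range e = (p : Set H) := by
      ext v
      constructor
      · rintro ⟨z, ⟨w, rfl⟩, rfl⟩
        exact w.2
      · intro hv
        exact ⟨⟨v, p.le_topologicalClosure hv⟩, ⟨⟨v, hv⟩, rfl⟩, rfl⟩
    rw [himg, ← Submodule.topologicalClosure_coe]
    exact y.2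
  -- extend to `K`
  let ut : K →L[ℂ] H := f.extend e
  have hut : ∀ z : p, ut (e z) = f z := fun z =>
    ContinuousLinearMap.extend_eq f h_dense he_isom.isUniformInducing z
  have hut_norm : ∀ y : K, ‖ut y‖ = ‖y‖ := by
    have hcl : IsClosed {y : K | ‖ut y‖ = ‖y‖} :=
      isClosed_eq (continuous_norm.comp ut.continuous) continuous_norm
    intro y
    refine h_dense.induction_on y hcl fun z => ?_
    rw [hut, he_norm]
    show ‖f₀ z‖ = ‖z‖
    exact hf₀norm z
  -- the candidate partial isometry
  let P : H →L[ℂ] K := K.orthogonalProjectionOnto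
  let u : H →L[ℂ] H := ut.comp P
  have hux : ∀ ξ : H, u (T ξ) = x ξ := by
    intro ξ
    have hpm : T ξ ∈ p := ⟨ξ, rfl⟩
    have hm : T ξ ∈ K := p.le_topologicalClosure hpm
    have hP : P (T ξ) = ⟨T ξ, hm⟩ :=
      Submodule.orthogonalProjectionOnto_mem_subspace_eq_self (⟨T ξ, hm⟩ : K)
    have hE : e ⟨T ξ, hpm⟩ = ⟨T ξ, hm⟩ := rfl
    show ut (P (T ξ)) = x ξ
    rw [hP, ← hE, hut]
    exact hf₀ ⟨T ξ, hpm⟩ ξ rfl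
  have hinner_ut : ∀ y z : K, (inner ℂ (ut y) (ut z) : ℂ) = inner ℂ (y : H) (z : H) := by
    let L : K →ₗᵢ[ℂ] H := ⟨ut.toLinearMap, hut_norm⟩
    intro y z
    exact L.inner_map_map y z
  have hadj : star u * u = K.subtypeL.comp P := by
    ext η
    refine ext_inner_left ℂ fun ζ => ?_
    show (inner ℂ ζ ((adjoint u) (u η)) : ℂ) = inner ℂ ζ ((P η : H))
    rw [adjoint_inner_right u ζ (u η)]
    show (inner ℂ (ut (P ζ)) (ut (P η)) : ℂ) = inner ℂ ζ ((P η : H))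
    rw [hinner_ut]
    calc (inner ℂ ((P ζ : H)) ((P η : H)) : ℂ)
        = inner ℂ ζ ((P ((P η : H)) : H)) :=
          Submodule.inner_starProjection_left_eq_right K ζ ((P η : H))
      _ = inner ℂ ζ ((P η : H)) := by
          rw [Submodule.orthogonalProjectionOnto_mem_subspace_eq_self]
  refine ⟨u, ?_, ?_⟩
  · rw [mul_assoc, hadj]
    ext η
    show ut (P ((P η : H))) = ut (P η)
    rw [Submodule.orthogonalProjectionOnto_mem_subspace_eq_self]
  · ext ξ
    exact hux ξ

/-- If `0 ≤ a ≤ b` as bounded operators on a complex Hilbert space (Loewner order),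
then there exists a partial isometry `u` with `a² ≤ u b² u*`. -/
theorem exists_partialIsometry_sq_le_conj_sq {H : Type*} [NormedAddCommGroup H]
    [InnerProductSpace ℂ H] [CompleteSpace H]
    (a b : H →L[ℂ] H) (ha : 0 ≤ a) (hab : a ≤ b) :
    ∃ u : H →L[ℂ] H, u ∘L (ContinuousLinearMap.adjoint u) ∘L u = u ∧
      a ∘L a ≤ u ∘L (b ∘L b) ∘L (ContinuousLinearMap.adjoint u) := by
  have hb : (0 : H →L[ℂ] H) ≤ b := ha.trans hab
  set sa : H →L[ℂ] H := CFC.sqrt a with hsadef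
  set sb : H →L[ℂ] H := CFC.sqrt b with hsbdef
  have hsa : (0 : H →L[ℂ] H) ≤ sa := CFC.sqrt_nonneg _
  have hsb : (0 : H →L[ℂ] H) ≤ sb := CFC.sqrt_nonneg _
  have hsa2 : sa * sa = a := CFC.sqrt_mul_sqrt_self a ha
  have hsb2 : sb * sb = b := CFC.sqrt_mul_sqrt_self b hb
  set x : H →L[ℂ] H := sa * sb with hxdef
  have hxstar : star x = sb * sa := by
    rw [hxdef, star_mul, hsa.isSelfAdjoint.star_eq, hsb.isSelfAdjoint.star_eq]
  -- `x* x ≤ b²`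
  have hxx : star x * x = sb * a * sb := by
    rw [hxstar, hxdef, ← hsa2]; noncomm_ring
  have hxxb : star x * x ≤ b * b := by
    rw [hxx]
    calc sb * a * sb = star sb * a * sb := by rw [hsb.isSelfAdjoint.star_eq]
      _ ≤ star sb * b * sb := star_left_conjugate_le_conjugate hab sb
      _ = b * b := by rw [hsb.isSelfAdjoint.star_eq, ← hsb2]; noncomm_ring
  -- `a² ≤ x x*`
  have hxxs : x * star x = sa * b * sa := by
    rw [hxstar, hxdef, ← hsb2]; noncomm_ring
  have haxx : a * a ≤ x * star x := by
    rw [hxxs]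
    calc a * a = star sa * a * sa := by rw [hsa.isSelfAdjoint.star_eq, ← hsa2]; noncomm_ring
      _ ≤ star sa * b * sa := star_left_conjugate_le_conjugate hab sa
      _ = sa * b * sa := by rw [hsa.isSelfAdjoint.star_eq]
  -- polar decomposition
  obtain ⟨u, hu1, hu2⟩ := polar_aux x
  set T : H →L[ℂ] H := CFC.sqrt (star x * x) with hTdef
  have hTsa : IsSelfAdjoint T := (CFC.sqrt_nonneg (star x * x)).isSelfAdjoint
  have hT2 : T * T = star x * x := CFC.sqrt_mul_sqrt_self _ (star_mul_self_nonneg x)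
  have hconj : u * (star x * x) * star u = x * star x := by
    have h1 : u * (T * T) * star u = (u * T) * star (u * T) := by
      rw [star_mul, hTsa.star_eq]; noncomm_ring
    rw [← hT2, h1, hu2]
  refine ⟨u, ?_, ?_⟩
  · show u * star u * u = u
    rw [ContinuousLinearMap.star_eq_adjoint] at hu1 ⊢
    exact hu1
  · show a * a ≤ u * (b * b) * star u
    calc a * a ≤ x * star x := haxx
      _ = u * (star x * x) * star u := hconj.symm
      _ ≤ u * (b * b) * star u := star_right_conjugate_le_conjugate hxxb u
end

section
/- Let f : ℝ → ℝ be measurable, bounded and integrable with respect to Lebesgue measure λ, and let t > 0. Then sup { ∫_E |f| dλ : E ⊆ ℝ measurable, λ(E) ≤ t } = inf { ‖g‖_{L¹} + t·‖h‖_{L^∞} : g integrable, h essentially bounded, f = g + h λ-a.e. }. -/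
open MeasureTheory
open Set ENNReal

/-- Sierpiński-type lemma for Lebesgue measure on ℝ. -/
lemma exists_subset_volume_eq {s : Set ℝ} (hs : MeasurableSet s) (hfin : volume s ≠ ⊤)
    {r : ℝ≥0∞} (hr : r ≤ volume s) : ∃ F ⊆ s, MeasurableSet F ∧ volume F = r := by
  rcases eq_or_lt_of_le hr with h | h
  · exact ⟨s, subset_rfl, hs, h.symm⟩
  rcases eq_or_ne r 0 with rfl | hr0
  · exact ⟨∅, empty_subset _, MeasurableSet.empty, measure_empty⟩
  have hrfin : r ≠ ⊤ := (h.trans_le le_top).ne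
  set φ : ℝ → ℝ := fun u => (volume (s ∩ Iic u)).toReal with hφ
  have hmono : ∀ {v u : ℝ}, v ≤ u → φ u - φ v = (volume (s ∩ Ioc v u)).toReal := by
    intro v u hvu
    have hsplit : s ∩ Iic u = (s ∩ Iic v) ∪ (s ∩ Ioc v u) := by
      rw [← inter_union_distrib_left, Iic_union_Ioc_eq_Iic hvu]
    have hdisj : Disjoint (s ∩ Iic v) (s ∩ Ioc v u) :=
      Disjoint.mono inter_subset_right inter_subset_right
        (Iic_disjoint_Ioc le_rfl)
    have hu := measure_union (μ := volume) hdisj ((hs.inter measurableSet_Ioc))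
    have h1 : volume (s ∩ Iic v) ≠ ⊤ :=
      ((measure_mono inter_subset_left).trans_lt (lt_of_le_of_ne le_top hfin)).ne
    have h2 : volume (s ∩ Ioc v u) ≠ ⊤ :=
      ((measure_mono inter_subset_left).trans_lt (lt_of_le_of_ne le_top hfin)).ne
    simp only [hφ]
    rw [hsplit, hu, ENNReal.toReal_add h1 h2]
    ring
  have hfinu : ∀ u, volume (s ∩ Iic u) ≠ ⊤ := fun u =>
    ((measure_mono inter_subset_left).trans_lt (lt_of_le_of_ne le_top hfin)).ne
  have key : ∀ v u : ℝ, v ≤ u → dist (φ u) (φ v) ≤ dist u v := by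
    intro v u hvu
    rw [Real.dist_eq, Real.dist_eq]
    have h1 : φ u - φ v = (volume (s ∩ Ioc v u)).toReal := hmono hvu
    have h2 : volume (s ∩ Ioc v u) ≤ ENNReal.ofReal (u - v) := by
      calc volume (s ∩ Ioc v u) ≤ volume (Ioc v u) := measure_mono inter_subset_right
        _ = ENNReal.ofReal (u - v) := Real.volume_Ioc
    have h3 : (volume (s ∩ Ioc v u)).toReal ≤ u - v := by
      calc (volume (s ∩ Ioc v u)).toReal ≤ (ENNReal.ofReal (u - v)).toReal :=
            ENNReal.toReal_mono ENNReal.ofReal_ne_top h2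
        _ = u - v := ENNReal.toReal_ofReal (by linarith)
    rw [h1] at *
    rw [abs_of_nonneg ENNReal.toReal_nonneg, ← h1]
    rw [h1]
    exact h3.trans (le_abs_self _)
  have hlip : LipschitzWith 1 φ := by
    apply LipschitzWith.of_dist_le_mul
    intro u v
    rw [NNReal.coe_one, one_mul]
    rcases le_total v u with hvu | huv
    · exact key v u hvu
    · rw [dist_comm (φ u), dist_comm u]; exact key u v huv
  -- find b with r.toReal ≤ φ b
  have hUnion : s = ⋃ n : ℕ, s ∩ Iic (n : ℝ) := by
    ext x
    simp only [mem_iUnion, mem_inter_iff, mem_Iic]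
    constructor
    · intro hx
      obtain ⟨n, hn⟩ := exists_nat_ge x
      exact ⟨n, hx, hn⟩
    · rintro ⟨n, hx, -⟩; exact hx
  have hsup : volume s = ⨆ n : ℕ, volume (s ∩ Iic (n : ℝ)) := by
    conv_lhs => rw [hUnion]
    exact Monotone.measure_iUnion (fun m n hmn =>
      inter_subset_inter_right s (Iic_subset_Iic.2 (by exact_mod_cast hmn)))
  obtain ⟨b, hb⟩ : ∃ n : ℕ, r < volume (s ∩ Iic (n : ℝ)) := by
    rw [hsup] at h; exact lt_iSup_iff.mp h
  -- find a with φ a ≤ r.toReal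
  have hInter : (⋂ n : ℕ, s ∩ Iic (-(n : ℝ) - 1)) = ∅ := by
    ext x
    simp only [mem_iInter, mem_inter_iff, mem_Iic, mem_empty_iff_false, iff_false, not_forall]
    obtain ⟨n, hn⟩ := exists_nat_gt (-x)
    exact ⟨n, fun ⟨_, hx⟩ => by linarith⟩
  have hanti : Antitone (fun n : ℕ => s ∩ Iic (-(n : ℝ) - 1)) := by
    intro m n hmn
    refine inter_subset_inter_right s (Iic_subset_Iic.2 ?_)
    have : (m:ℝ) ≤ n := by exact_mod_cast hmn
    linarith
  have hinf : (⨅ n : ℕ, volume (s ∩ Iic (-(n : ℝ) - 1))) = 0 := by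
    rw [← Antitone.measure_iInter hanti
      (fun n => (hs.inter measurableSet_Iic).nullMeasurableSet) ⟨0, hfinu _⟩,
      hInter, measure_empty]
  obtain ⟨a, ha⟩ : ∃ n : ℕ, volume (s ∩ Iic (-(n : ℝ) - 1)) < r := by
    by_contra hcon
    push_neg at hcon
    exact hr0 (le_antisymm (hinf ▸ le_iInf hcon) zero_le)
  have hab : -(a : ℝ) - 1 ≤ (b : ℝ) := by
    have h0 : (0:ℝ) ≤ b := Nat.cast_nonneg b
    have h1 : (0:ℝ) ≤ a := Nat.cast_nonneg a
    linarith
  have hφa : φ (-(a : ℝ) - 1) ≤ r.toReal :=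
    (ENNReal.toReal_le_toReal (hfinu _) hrfin).mpr ha.le
  have hφb : r.toReal ≤ φ (b : ℝ) :=
    (ENNReal.toReal_le_toReal hrfin (hfinu _)).mpr hb.le
  obtain ⟨c, -, hc⟩ := intermediate_value_Icc hab hlip.continuous.continuousOn
    (mem_Icc.mpr ⟨hφa, hφb⟩)
  refine ⟨s ∩ Iic c, inter_subset_left, hs.inter measurableSet_Iic, ?_⟩
  have : (volume (s ∩ Iic c)).toReal = r.toReal := hc
  exact (ENNReal.toReal_eq_toReal_iff' (hfinu c) hrfin).mp this


/-- For an integrable, bounded, measurable `f : ℝ → ℝ` and `t > 0`, the supremum of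
`∫_E |f|` over measurable sets `E` of Lebesgue measure at most `t` equals the
K-functional `K_t(f, L¹, L^∞) = inf { ‖g‖₁ + t‖h‖_∞ : f = g + h a.e. }`. -/
theorem kFunctional_L1_Linfty_eq_sSup (f : ℝ → ℝ) (hf_meas : Measurable f)
    (hf_bdd : ∃ C : ℝ, ∀ x, |f x| ≤ C) (hf_int : Integrable f (volume : Measure ℝ))
    (t : ℝ) (ht : 0 < t) :
    sSup {r : ℝ | ∃ E : Set ℝ, MeasurableSet E ∧ volume E ≤ ENNReal.ofReal t ∧
        r = ∫ x in E, |f x|} =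
      sInf {r : ℝ | ∃ g h : ℝ → ℝ, Integrable g (volume : Measure ℝ) ∧
        MemLp h ⊤ (volume : Measure ℝ) ∧ f =ᵐ[(volume : Measure ℝ)] g + h ∧
        r = (∫ x, |g x|) + t * (eLpNorm h ⊤ (volume : Measure ℝ)).toReal} := by
  set S1 := {r : ℝ | ∃ E : Set ℝ, MeasurableSet E ∧ volume E ≤ ENNReal.ofReal t ∧
      r = ∫ x in E, |f x|} with hS1
  set S2 := {r : ℝ | ∃ g h : ℝ → ℝ, Integrable g (volume : Measure ℝ) ∧
      MemLp h ⊤ (volume : Measure ℝ) ∧ f =ᵐ[(volume : Measure ℝ)] g + h ∧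
      r = (∫ x, |g x|) + t * (eLpNorm h ⊤ (volume : Measure ℝ)).toReal} with hS2
  have hS1ne : S1.Nonempty := ⟨0, ∅, MeasurableSet.empty, by simp, by simp⟩
  have hS2ne : S2.Nonempty := by
    refine ⟨∫ x, |f x|, f, 0, hf_int, MemLp.zero, by simp, by simp⟩
  have hS1bdd : BddAbove S1 := by
    refine ⟨∫ x, |f x|, ?_⟩
    rintro r ⟨E, hEm, hEv, rfl⟩
    exact setIntegral_le_integral hf_int.abs (ae_of_all _ fun x => abs_nonneg _)
  have hS2bdd : BddBelow S2 := by
    refine ⟨0, ?_⟩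
    rintro r ⟨g, h, hg, hh, hfg, rfl⟩
    have h1 : 0 ≤ ∫ x, |g x| := integral_nonneg fun x => abs_nonneg _
    have h2 : 0 ≤ t * (eLpNorm h ⊤ volume).toReal :=
      mul_nonneg ht.le ENNReal.toReal_nonneg
    linarith
  -- easy direction: every element of S1 ≤ every element of S2
  have hle : ∀ r₁ ∈ S1, ∀ r₂ ∈ S2, r₁ ≤ r₂ := by
    rintro r₁ ⟨E, hEm, hEv, rfl⟩ r₂ ⟨g, h, hg, hh, hfg, rfl⟩
    have hEfin : volume E ≠ ⊤ := (hEv.trans_lt ENNReal.ofReal_lt_top).ne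
    haveI : IsFiniteMeasure (volume.restrict E) :=
      ⟨by rwa [Measure.restrict_apply_univ, lt_top_iff_ne_top]⟩
    have hh_int : IntegrableOn h E volume := (hh.restrict E).integrable le_top
    have hg_int : IntegrableOn g E volume := hg.integrableOn
    set M := (eLpNorm h ⊤ volume).toReal with hM
    have hhM : ∀ᵐ x ∂volume, |h x| ≤ M := by
      have h1 : ∀ᵐ x ∂volume, (‖h x‖₊ : ℝ≥0∞) ≤ eLpNormEssSup h volume :=
        ae_le_eLpNormEssSup
      filter_upwards [h1] with x hx
      have hfin : eLpNormEssSup h volume ≠ ⊤ := by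
        rw [← eLpNorm_exponent_top]; exact hh.2.ne
      have := ENNReal.toReal_mono hfin hx
      simpa [hM, eLpNorm_exponent_top] using this
    have step1 : ∫ x in E, |f x| = ∫ x in E, |g x + h x| := by
      refine integral_congr_ae ?_
      filter_upwards [ae_restrict_of_ae hfg] with x hx
      rw [hx]; rfl
    have step2 : ∫ x in E, |g x + h x| ≤ ∫ x in E, (|g x| + |h x|) := by
      refine integral_mono (hg_int.add hh_int).abs (hg_int.abs.add hh_int.abs) ?_
      intro x; exact abs_add_le _ _
    have step3 : ∫ x in E, (|g x| + |h x|) = (∫ x in E, |g x|) + ∫ x in E, |h x| :=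
      integral_add hg_int.abs hh_int.abs
    have step4 : ∫ x in E, |g x| ≤ ∫ x, |g x| :=
      setIntegral_le_integral hg.abs (ae_of_all _ fun x => abs_nonneg _)
    have step5 : ∫ x in E, |h x| ≤ M * t := by
      have hMnn : 0 ≤ M := ENNReal.toReal_nonneg
      have h1 : ∫ x in E, |h x| ≤ ∫ _ in E, M := by
        refine integral_mono_ae hh_int.abs (integrableOn_const (lt_top_iff_ne_top.mp ?_)) ?_
        · exact lt_top_iff_ne_top.mpr hEfin
        · exact ae_restrict_of_ae hhM
      have h2 : ∫ _ in E, M ∂volume = (volume E).toReal • M := setIntegral_const M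
      have h3 : (volume E).toReal ≤ t := by
        have := ENNReal.toReal_mono ENNReal.ofReal_ne_top hEv
        rwa [ENNReal.toReal_ofReal ht.le] at this
      calc ∫ x in E, |h x| ≤ (volume E).toReal • M := h1.trans_eq h2
        _ = (volume E).toReal * M := by rw [smul_eq_mul]
        _ ≤ t * M := mul_le_mul_of_nonneg_right h3 hMnn
        _ = M * t := mul_comm _ _
    calc ∫ x in E, |f x| = ∫ x in E, |g x + h x| := step1
      _ ≤ ∫ x in E, (|g x| + |h x|) := step2
      _ = (∫ x in E, |g x|) + ∫ x in E, |h x| := step3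
      _ ≤ (∫ x, |g x|) + M * t := add_le_add step4 step5
      _ = (∫ x, |g x|) + t * M := by ring
  refine le_antisymm (csSup_le hS1ne fun r₁ hr₁ => le_csInf hS2ne fun r₂ hr₂ =>
    hle r₁ hr₁ r₂ hr₂) ?_
  -- hard direction: sInf S2 ≤ sSup S1
  obtain ⟨C, hC⟩ := hf_bdd
  have hfinμ : ∀ c : ℝ, 0 < c → volume {x : ℝ | c < |f x|} ≠ ⊤ := by
    intro c hc
    refine ((measure_mono ?_).trans_lt (hf_int.measure_norm_ge_lt_top hc)).ne
    intro x hx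
    simp only [mem_setOf_eq, Real.norm_eq_abs] at *
    exact hx.le
  set cset := {c : ℝ | 0 ≤ c ∧ volume {x : ℝ | c < |f x|} ≤ ENNReal.ofReal t} with hcset
  have hcne : cset.Nonempty := by
    refine ⟨max C 0, le_max_right _ _, ?_⟩
    have hemp : {x : ℝ | max C 0 < |f x|} = ∅ := by
      ext x; simp only [mem_setOf_eq, mem_empty_iff_false, iff_false, not_lt]
      exact (hC x).trans (le_max_left _ _)
    rw [hemp, measure_empty]; exact zero_le
  have hcbdd : BddBelow cset := ⟨0, fun c hc => hc.1⟩
  set c₀ := sInf cset with hc₀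
  have hc₀0 : 0 ≤ c₀ := le_csInf hcne fun c hc => hc.1
  have claimA : volume {x : ℝ | c₀ < |f x|} ≤ ENNReal.ofReal t := by
    have hun : {x : ℝ | c₀ < |f x|} = ⋃ n : ℕ, {x : ℝ | c₀ + 1/((n:ℝ)+1) < |f x|} := by
      ext x
      simp only [mem_iUnion, mem_setOf_eq]
      constructor
      · intro hx
        obtain ⟨n, hn⟩ := exists_nat_one_div_lt (sub_pos.mpr hx)
        exact ⟨n, by linarith⟩
      · rintro ⟨n, hn⟩
        have : 0 < 1/((n:ℝ)+1) := by positivity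
        linarith
    have hmono : Monotone fun n : ℕ => {x : ℝ | c₀ + 1/((n:ℝ)+1) < |f x|} := by
      intro m n hmn x hx
      simp only [mem_setOf_eq] at *
      have h1 : 1/((n:ℝ)+1) ≤ 1/((m:ℝ)+1) := by
        apply one_div_le_one_div_of_le (by positivity)
        have : (m:ℝ) ≤ n := by exact_mod_cast hmn
        linarith
      linarith
    rw [hun, Monotone.measure_iUnion hmono]
    refine iSup_le fun n => ?_
    obtain ⟨c', hc'mem, hc'lt⟩ := exists_lt_of_csInf_lt hcne
      (lt_add_of_pos_right c₀ (by positivity : (0:ℝ) < 1/((n:ℝ)+1)))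
    refine (measure_mono ?_).trans hc'mem.2
    intro x hx
    simp only [mem_setOf_eq] at *
    linarith
  rcases eq_or_lt_of_le hc₀0 with hzero | hpos
  · -- case c₀ = 0
    set E := {x : ℝ | 0 < |f x|} with hE
    have hEm : MeasurableSet E := measurableSet_lt measurable_const hf_meas.abs
    have hEv : volume E ≤ ENNReal.ofReal t := by rw [← hzero] at claimA; exact claimA
    have hint : ∫ x in E, |f x| = ∫ x, |f x| := by
      refine setIntegral_eq_integral_of_forall_compl_eq_zero fun x hx => ?_
      simp only [hE, mem_setOf_eq, not_lt] at hx
      exact le_antisymm hx (abs_nonneg _)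
    have hmem1 : (∫ x, |f x|) ∈ S2 := ⟨f, 0, hf_int, MemLp.zero, by simp, by simp⟩
    have hmem2 : (∫ x in E, |f x|) ∈ S1 := ⟨E, hEm, hEv, rfl⟩
    calc sInf S2 ≤ ∫ x, |f x| := csInf_le hS2bdd hmem1
      _ = ∫ x in E, |f x| := hint.symm
      _ ≤ sSup S1 := le_csSup hS1bdd hmem2
  · -- case 0 < c₀
    have claimB : ENNReal.ofReal t ≤ volume {x : ℝ | c₀ ≤ |f x|} := by
      set T : ℕ → Set ℝ := fun n => {x : ℝ | c₀ - c₀/((n:ℝ)+2) < |f x|} with hT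
      have hTinter : {x : ℝ | c₀ ≤ |f x|} = ⋂ n, T n := by
        ext x
        simp only [hT, mem_iInter, mem_setOf_eq]
        constructor
        · intro hx n
          have h1 : 0 < c₀/((n:ℝ)+2) := by positivity
          linarith
        · intro hx
          by_contra hcon
          push_neg at hcon
          have hd : 0 < c₀ - |f x| := by linarith
          obtain ⟨n, hn⟩ := exists_nat_one_div_lt (div_pos hd hpos)
          have hn1 : (0:ℝ) < (n:ℝ)+1 := by positivity
          rw [div_lt_div_iff₀ hn1 hpos] at hn
          have h2 : c₀/((n:ℝ)+1) < c₀ - |f x| := by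
            rw [div_lt_iff₀ hn1]
            nlinarith
          have h3 : c₀/((n:ℝ)+2) ≤ c₀/((n:ℝ)+1) := by
            apply div_le_div_of_nonneg_left hc₀0 hn1
            linarith
          have := hx n
          linarith
      have hTanti : Antitone T := by
        intro m n hmn x hx
        simp only [hT, mem_setOf_eq] at *
        have hmn' : (m:ℝ) ≤ n := by exact_mod_cast hmn
        have h1 : c₀/((n:ℝ)+2) ≤ c₀/((m:ℝ)+2) := by
          apply div_le_div_of_nonneg_left hc₀0 (by positivity)
          linarith
        linarith
      have hTfin : volume (T 0) ≠ ⊤ := by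
        refine hfinμ _ ?_
        push_cast
        linarith
      rw [hTinter, Antitone.measure_iInter hTanti (fun n =>
        (measurableSet_lt measurable_const hf_meas.abs).nullMeasurableSet) ⟨0, hTfin⟩]
      refine le_iInf fun n => ?_
      have hcn0 : 0 ≤ c₀ - c₀/((n:ℝ)+2) := by
        have h1 : c₀/((n:ℝ)+2) ≤ c₀/1 := by
          apply div_le_div_of_nonneg_left hc₀0 one_pos
          linarith [Nat.cast_nonneg (α := ℝ) n]
        simp only [div_one] at h1
        linarith
      have hlt : c₀ - c₀/((n:ℝ)+2) < c₀ := by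
        have : 0 < c₀/((n:ℝ)+2) := by positivity
        linarith
      have hnotmem : c₀ - c₀/((n:ℝ)+2) ∉ cset := fun hmem =>
        absurd (csInf_le hcbdd hmem) (not_le.mpr hlt)
      have : ¬ volume (T n) ≤ ENNReal.ofReal t := fun hv => hnotmem ⟨hcn0, hv⟩
      exact (not_le.mp this).le
    set E₀ := {x : ℝ | c₀ < |f x|} with hE₀
    have hE₀m : MeasurableSet E₀ := measurableSet_lt measurable_const hf_meas.abs
    have hE₀fin : volume E₀ ≠ ⊤ := hfinμ c₀ hpos
    set A := {x : ℝ | c₀ ≤ |f x|} with hA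
    have hAm : MeasurableSet A := measurableSet_le measurable_const hf_meas.abs
    have hAfin : volume A ≠ ⊤ := by
      refine ((measure_mono ?_).trans_lt (hf_int.measure_norm_ge_lt_top hpos)).ne
      intro x hx; simpa [hA, Real.norm_eq_abs] using hx
    have hE₀A : E₀ ⊆ A := by
      intro x hx
      simp only [hE₀, hA, mem_setOf_eq] at *
      exact hx.le
    set B := A \ E₀ with hB
    have hBm : MeasurableSet B := hAm.diff hE₀m
    have hBfin : volume B ≠ ⊤ :=
      ((measure_mono diff_subset).trans_lt (lt_top_iff_ne_top.mpr hAfin)).ne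
    have hAeq : volume A = volume E₀ + volume B := by
      rw [hB, ← measure_union disjoint_sdiff_right hBm, union_diff_cancel hE₀A]
    have hrB : ENNReal.ofReal t - volume E₀ ≤ volume B := by
      rw [tsub_le_iff_left]
      calc ENNReal.ofReal t ≤ volume A := claimB
        _ = volume E₀ + volume B := hAeq
    obtain ⟨F, hFB, hFm, hFv⟩ := exists_subset_volume_eq hBm hBfin hrB
    set E := E₀ ∪ F with hEdef
    have hEm : MeasurableSet E := hE₀m.union hFm
    have hdisjF : Disjoint E₀ F := disjoint_sdiff_right.mono_right hFB
    have hEv : volume E = ENNReal.ofReal t := by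
      rw [hEdef, measure_union hdisjF hFm, hFv, add_tsub_cancel_of_le claimA]
    set h := fun x : ℝ => max (-c₀) (min c₀ (f x)) with hh
    set g := fun x : ℝ => f x - h x with hg
    have hhabs : ∀ x, |h x| ≤ c₀ := by
      intro x
      rw [abs_le]
      exact ⟨le_max_left _ _, max_le (by linarith) (min_le_left _ _)⟩
    have hhf : ∀ x, |h x| ≤ |f x| := by
      intro x
      simp only [hh]
      rcases le_total 0 (f x) with hfx | hfx
      · have h0 : 0 ≤ min c₀ (f x) := le_min hc₀0 hfx
        rw [max_eq_right (by linarith), abs_of_nonneg h0, abs_of_nonneg hfx]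
        exact min_le_right _ _
      · rw [min_eq_right (by linarith)]
        have h2 : max (-c₀) (f x) ≤ 0 := max_le (by linarith) hfx
        rw [abs_of_nonpos h2, abs_of_nonpos hfx]
        exact neg_le_neg (le_max_right _ _)
    have hh_meas : Measurable h := measurable_const.max (measurable_const.min hf_meas)
    have hh_int : Integrable h volume := hf_int.mono hh_meas.aestronglyMeasurable
      (ae_of_all _ fun x => by simpa [Real.norm_eq_abs] using hhf x)
    have hg_int : Integrable g volume := hf_int.sub hh_int
    have hh_mem : MemLp h ⊤ volume := memLp_top_of_bound hh_meas.aestronglyMeasurable c₀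
      (ae_of_all _ fun x => by simpa [Real.norm_eq_abs] using hhabs x)
    have hh_elp : (eLpNorm h ⊤ volume).toReal ≤ c₀ := by
      have h1 : eLpNorm h ⊤ volume ≤ ENNReal.ofReal c₀ := by
        rw [eLpNorm_exponent_top]
        exact eLpNormEssSup_le_of_ae_bound
          (ae_of_all _ fun x => by simpa [Real.norm_eq_abs] using hhabs x)
      calc (eLpNorm h ⊤ volume).toReal ≤ (ENNReal.ofReal c₀).toReal :=
            ENNReal.toReal_mono ENNReal.ofReal_ne_top h1
        _ = c₀ := ENNReal.toReal_ofReal hc₀0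
    have hgabs : ∀ x, |g x| = E₀.indicator (fun y => |f y| - c₀) x := by
      intro x
      by_cases hx : x ∈ E₀
      · rw [indicator_of_mem hx]
        have hx' : c₀ < |f x| := hx
        simp only [hg, hh]
        rcases le_total 0 (f x) with hfx | hfx
        · have hcf : c₀ < f x := by rwa [abs_of_nonneg hfx] at hx'
          rw [min_eq_left hcf.le, max_eq_right (by linarith),
            abs_of_nonneg (by linarith), abs_of_nonneg hfx]
        · have hcf : f x < -c₀ := by rw [abs_of_nonpos hfx] at hx'; linarith
          rw [min_eq_right (by linarith), max_eq_left (by linarith),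
            abs_of_nonpos (by linarith), abs_of_nonpos hfx]
          ring
      · rw [indicator_of_notMem hx]
        have hx' : |f x| ≤ c₀ := not_lt.mp hx
        obtain ⟨ha1, ha2⟩ := abs_le.mp hx'
        simp only [hg, hh]
        rw [min_eq_right ha2, max_eq_right ha1, sub_self, abs_zero]
    have hgint_eq : ∫ x, |g x| = ∫ x in E₀, (|f x| - c₀) := by
      simp only [hgabs]
      rw [integral_indicator hE₀m]
    have hconst_int : IntegrableOn (fun _ : ℝ => c₀) E₀ volume :=
      integrableOn_const hE₀fin
    have hsub : ∫ x in E₀, (|f x| - c₀) = (∫ x in E₀, |f x|) - c₀ * (volume E₀).toReal := by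
      rw [integral_sub hf_int.abs.integrableOn hconst_int, setIntegral_const, smul_eq_mul, measureReal_def]
      ring
    have hm_le : (volume E₀).toReal ≤ t := by
      have := ENNReal.toReal_mono ENNReal.ofReal_ne_top claimA
      rwa [ENNReal.toReal_ofReal ht.le] at this
    have hFt : (volume F).toReal = t - (volume E₀).toReal := by
      rw [hFv, ENNReal.toReal_sub_of_le claimA ENNReal.ofReal_ne_top,
        ENNReal.toReal_ofReal ht.le]
    have hFfin : volume F ≠ ⊤ := by
      rw [hFv]; exact (tsub_le_self.trans_lt ENNReal.ofReal_lt_top).ne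
    have hint_split : ∫ x in E, |f x| = (∫ x in E₀, |f x|) + ∫ x in F, |f x| :=
      setIntegral_union hdisjF hFm hf_int.abs.integrableOn hf_int.abs.integrableOn
    have hFA : F ⊆ A := hFB.trans diff_subset
    have hFlow : c₀ * (volume F).toReal ≤ ∫ x in F, |f x| := by
      have h1 : ∫ _ in F, c₀ ∂volume ≤ ∫ x in F, |f x| := by
        refine setIntegral_mono_on
          (integrableOn_const hFfin)
          hf_int.abs.integrableOn hFm fun x hx => hFA hx
      rwa [setIntegral_const, smul_eq_mul, mul_comm, measureReal_def] at h1
    have hmem2 : (∫ x in E, |f x|) ∈ S1 := ⟨E, hEm, hEv.le, rfl⟩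
    have hfg : f =ᵐ[volume] g + h := by
      refine ae_of_all _ fun x => ?_
      simp only [Pi.add_apply, hg]
      ring
    have hmem1 : ((∫ x, |g x|) + t * (eLpNorm h ⊤ volume).toReal) ∈ S2 :=
      ⟨g, h, hg_int, hh_mem, hfg, rfl⟩
    calc sInf S2 ≤ (∫ x, |g x|) + t * (eLpNorm h ⊤ volume).toReal := csInf_le hS2bdd hmem1
      _ ≤ (∫ x, |g x|) + t * c₀ :=
          add_le_add_right (mul_le_mul_of_nonneg_left hh_elp ht.le) _
      _ = (∫ x in E₀, |f x|) - c₀ * (volume E₀).toReal + t * c₀ := by rw [hgint_eq, hsub]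
      _ = (∫ x in E₀, |f x|) + c₀ * (volume F).toReal := by rw [hFt]; ring
      _ ≤ (∫ x in E₀, |f x|) + ∫ x in F, |f x| := add_le_add_right hFlow _
      _ = ∫ x in E, |f x| := hint_split.symm
      _ ≤ sSup S1 := le_csSup hS1bdd hmem2
end

section
/- Let N ≥ 1, p ∈ [1,2], and let a, b be complex N×N matrices. Then (‖a − b‖_p^p + ‖a + b‖_p^p)/2 ≤ ‖a‖_p^p + ‖b‖_p^p, where ‖x‖_p^p = Tr((xᴴx)^{p/2}). -/
open Matrix

/-- `‖x‖_p^p = Tr((xᴴx)^(p/2))` for a complex `N×N` matrix, the matrix power being given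
by the continuous functional calculus. -/
noncomputable def schattenPowP {N : ℕ} (p : ℝ) (x : Matrix (Fin N) (Fin N) ℂ) : ℝ :=
  ((cfc (fun t : ℝ => t ^ (p / 2)) (xᴴ * x)).trace).re

namespace SchattenClarksonAux

open scoped ComplexOrder
open MeasureTheory Set


noncomputable def Kq (q : ℝ) : ℝ := ∫ s in Set.Ioi (0:ℝ), s ^ (q-1) / (1 + s)

lemma contOn (q μ : ℝ) (hμ : 0 < μ) :
    ContinuousOn (fun s : ℝ => s ^ (q-1) / (μ + s)) (Set.Ioi 0) := by
  apply ContinuousOn.div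
  · exact ContinuousOn.rpow_const continuousOn_id (fun x hx => Or.inl (ne_of_gt hx))
  · exact (continuous_const.add continuous_id).continuousOn
  · intro x hx
    have : (0:ℝ) < x := hx
    positivity

lemma intOn {q : ℝ} (hq0 : 0 < q) (hq1 : q < 1) {μ : ℝ} (hμ : 0 < μ) :
    MeasureTheory.IntegrableOn (fun s : ℝ => s ^ (q-1) / (μ + s)) (Set.Ioi 0) := by
  rw [← Set.Ioc_union_Ioi_eq_Ioi (zero_le_one)]
  refine MeasureTheory.IntegrableOn.union ?_ ?_
  · have base : MeasureTheory.IntegrableOn (fun s : ℝ => μ⁻¹ * s ^ (q-1)) (Set.Ioc (0:ℝ) 1) := by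
      have h1 := intervalIntegral.intervalIntegrable_rpow' (r := q-1) (a := 0) (b := 1)
        (by linarith)
      rw [intervalIntegrable_iff_integrableOn_Ioc_of_le zero_le_one] at h1
      exact h1.const_mul _
    refine MeasureTheory.Integrable.mono' base
      (((contOn q μ hμ).mono Set.Ioc_subset_Ioi_self).aestronglyMeasurable measurableSet_Ioc) ?_
    refine (MeasureTheory.ae_restrict_iff' measurableSet_Ioc).mpr (Filter.Eventually.of_forall ?_)
    intro x hx
    have hx0 : (0:ℝ) < x := hx.1
    have hnum : (0:ℝ) ≤ x ^ (q-1) := Real.rpow_nonneg hx0.le _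
    rw [Real.norm_eq_abs, abs_of_nonneg (div_nonneg hnum (by positivity))]
    rw [inv_mul_eq_div]
    exact div_le_div_of_nonneg_left hnum hμ (by linarith)
  · have base : MeasureTheory.IntegrableOn (fun s : ℝ => s ^ (q-2)) (Set.Ioi (1:ℝ)) :=
      integrableOn_Ioi_rpow_of_lt (by linarith) zero_lt_one
    refine MeasureTheory.Integrable.mono' base
      (((contOn q μ hμ).mono (Set.Ioi_subset_Ioi zero_le_one)).aestronglyMeasurable
        measurableSet_Ioi) ?_
    refine (MeasureTheory.ae_restrict_iff' measurableSet_Ioi).mpr (Filter.Eventually.of_forall ?_)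
    intro x hx
    have hx1 : (1:ℝ) < x := hx
    have hx0 : (0:ℝ) < x := lt_trans zero_lt_one hx1
    have hnum : (0:ℝ) ≤ x ^ (q-1) := Real.rpow_nonneg hx0.le _
    rw [Real.norm_eq_abs, abs_of_nonneg (div_nonneg hnum (by positivity))]
    have h2 : x ^ (q-1) / (μ + x) ≤ x ^ (q-1) / x :=
      div_le_div_of_nonneg_left hnum hx0 (by linarith)
    refine h2.trans_eq ?_
    rw [div_eq_mul_inv, ← Real.rpow_neg_one x, ← Real.rpow_add hx0]
    congr 1
    ring

lemma J_eq {q : ℝ} {μ : ℝ} (hμ : 0 < μ) :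
    ∫ s in Set.Ioi (0:ℝ), s ^ (q-1) / (μ + s) = μ ^ (q-1) * Kq q := by
  have h := MeasureTheory.integral_comp_mul_left_Ioi (fun s => s ^ (q-1) / (μ + s)) 0 hμ
  rw [mul_zero] at h
  have h2 : Set.EqOn (fun x : ℝ => (fun s : ℝ => s ^ (q-1) / (μ + s)) (μ * x))
      (fun x : ℝ => (μ ^ (q-1) * μ⁻¹) * (x ^ (q-1) / (1 + x))) (Set.Ioi 0) := by
    intro x hx
    have hx0 : (0:ℝ) < x := hx
    simp only
    rw [Real.mul_rpow hμ.le hx0.le]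
    have hden : μ + μ * x = μ * (1 + x) := by ring
    rw [hden]
    have h1x : (0:ℝ) < 1 + x := by linarith
    field_simp
  rw [MeasureTheory.setIntegral_congr_fun measurableSet_Ioi h2] at h
  rw [MeasureTheory.integral_const_mul] at h
  have hK : (μ ^ (q-1) * μ⁻¹) * Kq q = μ⁻¹ * (∫ s in Set.Ioi (0:ℝ), s ^ (q-1) / (μ + s)) := by
    rw [Kq]; simpa [smul_eq_mul] using h
  have h3 : μ * (μ ^ (q-1) * μ⁻¹ * Kq q) = ∫ s in Set.Ioi (0:ℝ), s ^ (q-1) / (μ + s) := by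
    rw [hK, ← mul_assoc, mul_inv_cancel₀ hμ.ne', one_mul]
  rw [← h3]
  field_simp

lemma Kq_pos {q : ℝ} (hq0 : 0 < q) (hq1 : q < 1) : 0 < Kq q := by
  rw [Kq]
  have hint := intOn hq0 hq1 (zero_lt_one (α := ℝ))
  have hnn : 0 ≤ᵐ[volume.restrict (Set.Ioi (0:ℝ))] fun s : ℝ => s ^ (q-1) / (1 + s) := by
    refine (MeasureTheory.ae_restrict_iff' measurableSet_Ioi).mpr (Filter.Eventually.of_forall ?_)
    intro x hx
    have hx0 : (0:ℝ) < x := hx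
    positivity
  rw [MeasureTheory.setIntegral_pos_iff_support_of_nonneg_ae hnn hint]
  have hsub : Set.Ioi (0:ℝ) ⊆ Function.support (fun s : ℝ => s ^ (q-1) / (1 + s)) := by
    intro x hx
    have hx0 : (0:ℝ) < x := hx
    have : (0:ℝ) < x ^ (q-1) / (1 + x) := by positivity
    exact this.ne'
  calc (0 : ENNReal) < volume (Set.Ioi (0:ℝ)) := by simp [Real.volume_Ioi]
    _ ≤ volume (Function.support (fun s : ℝ => s ^ (q-1) / (1 + s)) ∩ Set.Ioi 0) :=
        measure_mono (Set.subset_inter hsub (le_refl _))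

lemma rpow_sub_one_mul {x q : ℝ} (hx : 0 ≤ x) (hq : q ≠ 0) : x ^ (q-1) * x = x ^ q := by
  rcases hx.eq_or_lt with h | h
  · rw [← h, Real.zero_rpow hq, mul_zero]
  · nth_rewrite 2 [← Real.rpow_one x]
    rw [← Real.rpow_add h]
    congr 1
    ring

lemma key_scalar {n m : Type*} [Fintype n] [Fintype m] {q : ℝ} (hq0 : 0 < q) (hq1 : q ≤ 1)
    (μ a : n → ℝ) (α : m → ℝ) (hμ : ∀ i, 0 ≤ μ i) (ha : ∀ i, 0 ≤ a i) (haμ : ∀ i, a i ≤ μ i)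
    (hα : ∀ j, 0 ≤ α j) (htr : ∑ i, a i = ∑ j, α j)
    (hres : ∀ s : ℝ, 0 < s → ∑ i, a i / (μ i + s) ≤ ∑ j, α j / (α j + s)) :
    ∑ i, (μ i) ^ (q - 1) * a i ≤ ∑ j, (α j) ^ q := by
  rcases eq_or_lt_of_le hq1 with rfl | hq1'
  · -- q = 1
    simp only [sub_self, Real.rpow_zero, one_mul, Real.rpow_one]
    exact le_of_eq htr
  -- q < 1
  set F : n → ℝ → ℝ := fun i s => a i * (s ^ (q-1) / (μ i + s)) with hF
  set G : m → ℝ → ℝ := fun j s => α j * (s ^ (q-1) / (α j + s)) with hG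
  have hFint : ∀ i, MeasureTheory.IntegrableOn (F i) (Set.Ioi 0) := by
    intro i
    rcases (hμ i).eq_or_lt with h | h
    · have hzero : a i = 0 := le_antisymm (by have := haμ i; rw [← h] at this; exact this) (ha i)
      have : F i = fun _ => 0 := by funext s; rw [hF]; simp [hzero]
      rw [this]
      exact MeasureTheory.integrableOn_zero
    · exact (intOn hq0 hq1' h).const_mul _
  have hGint : ∀ j, MeasureTheory.IntegrableOn (G j) (Set.Ioi 0) := by
    intro j
    rcases (hα j).eq_or_lt with h | h
    · have : G j = fun _ => 0 := by funext s; rw [hG]; simp [← h]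
      rw [this]
      exact MeasureTheory.integrableOn_zero
    · exact (intOn hq0 hq1' h).const_mul _
  have hFval : ∀ i, ∫ s in Set.Ioi (0:ℝ), F i s = (μ i) ^ (q-1) * a i * Kq q := by
    intro i
    rcases (hμ i).eq_or_lt with h | h
    · have hzero : a i = 0 := le_antisymm (by have := haμ i; rw [← h] at this; exact this) (ha i)
      have : F i = fun _ => 0 := by funext s; rw [hF]; simp [hzero]
      rw [this, hzero]
      simp
    · rw [hF]
      simp only
      rw [MeasureTheory.integral_const_mul, J_eq h]
      ring
  have hGval : ∀ j, ∫ s in Set.Ioi (0:ℝ), G j s = (α j) ^ q * Kq q := by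
    intro j
    rcases (hα j).eq_or_lt with h | h
    · have : G j = fun _ => 0 := by funext s; rw [hG]; simp [← h]
      rw [this, ← h]
      simp [Real.zero_rpow hq0.ne']
    · rw [hG]
      simp only
      rw [MeasureTheory.integral_const_mul, J_eq h, ← mul_assoc,
        mul_comm (α j) ((α j) ^ (q-1)), rpow_sub_one_mul (hα j) hq0.ne']
  have hmono : ∫ s in Set.Ioi (0:ℝ), (∑ i, F i s) ≤ ∫ s in Set.Ioi (0:ℝ), (∑ j, G j s) := by
    refine MeasureTheory.setIntegral_mono_on
      (MeasureTheory.integrable_finset_sum _ fun i _ => hFint i)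
      (MeasureTheory.integrable_finset_sum _ fun j _ => hGint j)
      measurableSet_Ioi ?_
    intro s hs
    have hs0 : (0:ℝ) < s := hs
    have hsr : (0:ℝ) ≤ s ^ (q-1) := Real.rpow_nonneg hs0.le _
    have h1 : ∑ i, F i s = s ^ (q-1) * ∑ i, a i / (μ i + s) := by
      rw [Finset.mul_sum]
      refine Finset.sum_congr rfl fun i _ => ?_
      rw [hF]
      simp only
      ring
    have h2 : ∑ j, G j s = s ^ (q-1) * ∑ j, α j / (α j + s) := by
      rw [Finset.mul_sum]
      refine Finset.sum_congr rfl fun j _ => ?_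
      rw [hG]
      simp only
      ring
    rw [h1, h2]
    exact mul_le_mul_of_nonneg_left (hres s hs0) hsr
  have hsumF : ∫ s in Set.Ioi (0:ℝ), (∑ i, F i s) = (∑ i, (μ i) ^ (q-1) * a i) * Kq q := by
    rw [MeasureTheory.integral_finset_sum _ fun i _ => hFint i, Finset.sum_mul]
    exact Finset.sum_congr rfl fun i _ => hFval i
  have hsumG : ∫ s in Set.Ioi (0:ℝ), (∑ j, G j s) = (∑ j, (α j) ^ q) * Kq q := by
    rw [MeasureTheory.integral_finset_sum _ fun j _ => hGint j, Finset.sum_mul]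
    exact Finset.sum_congr rfl fun j _ => hGval j
  rw [hsumF, hsumG] at hmono
  exact (mul_le_mul_iff_of_pos_right (Kq_pos hq0 hq1')).mp hmono


variable {N : ℕ}

variable {N : ℕ}

lemma trace_diagonal_mul' (d : Fin N → ℂ) (B : Matrix (Fin N) (Fin N) ℂ) :
    (Matrix.diagonal d * B).trace = ∑ i, d i * B i i := by
  simp [Matrix.trace, Matrix.diag, Matrix.diagonal_mul]

/-- conjugation of a real diagonal by a matrix `U`. -/
noncomputable def conjD (U : Matrix (Fin N) (Fin N) ℂ) (g : Fin N → ℝ) :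
    Matrix (Fin N) (Fin N) ℂ :=
  U * Matrix.diagonal (fun i => (g i : ℂ)) * star U

lemma conjD_mul (U : Matrix (Fin N) (Fin N) ℂ) (hU1 : star U * U = 1) (g₁ g₂ : Fin N → ℝ) :
    conjD U g₁ * conjD U g₂ = conjD U (fun i => g₁ i * g₂ i) := by
  unfold conjD
  calc U * Matrix.diagonal (fun i => (g₁ i : ℂ)) * star U *
        (U * Matrix.diagonal (fun i => (g₂ i : ℂ)) * star U)
      = U * (Matrix.diagonal (fun i => (g₁ i : ℂ)) * ((star U * U) *
          (Matrix.diagonal (fun i => (g₂ i : ℂ)) * star U))) := by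
        simp only [Matrix.mul_assoc]
    _ = U * (Matrix.diagonal (fun i => (g₁ i : ℂ)) *
          (Matrix.diagonal (fun i => (g₂ i : ℂ)) * star U)) := by rw [hU1, one_mul]
    _ = U * Matrix.diagonal (fun i => ((g₁ i * g₂ i : ℝ) : ℂ)) * star U := by
        simp only [← Matrix.mul_assoc]
        rw [Matrix.mul_assoc U, Matrix.diagonal_mul_diagonal]
        push_cast
        rfl

lemma conjD_one (U : Matrix (Fin N) (Fin N) ℂ) (hU2 : U * star U = 1) :
    conjD U (fun _ => 1) = 1 := by
  unfold conjD
  simp [hU2]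

lemma conjD_add (U : Matrix (Fin N) (Fin N) ℂ) (g₁ g₂ : Fin N → ℝ) :
    conjD U (fun i => g₁ i + g₂ i) = conjD U g₁ + conjD U g₂ := by
  unfold conjD
  have : (fun i => ((g₁ i + g₂ i : ℝ) : ℂ)) =
      (fun i => (g₁ i : ℂ) + (g₂ i : ℂ)) := by
    funext i; push_cast; rfl
  rw [this, ← Matrix.diagonal_add, Matrix.mul_add, Matrix.add_mul]

lemma conjD_smul_one (U : Matrix (Fin N) (Fin N) ℂ) (hU2 : U * star U = 1) (s : ℝ) :
    conjD U (fun _ => s) = (s : ℂ) • 1 := by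
  unfold conjD
  have : Matrix.diagonal (fun _ : Fin N => (s : ℂ)) = (s : ℂ) • 1 := by
    ext i j
    by_cases h : i = j <;>
      simp [Matrix.diagonal_apply, Matrix.one_apply, Matrix.smul_apply, h]
  rw [this, Matrix.mul_smul, Matrix.smul_mul, mul_one, hU2]

lemma trace_conjD_mul (U : Matrix (Fin N) (Fin N) ℂ) (g : Fin N → ℝ)
    (A : Matrix (Fin N) (Fin N) ℂ) :
    (conjD U g * A).trace = ∑ i, (g i : ℂ) * ((star U * A * U) i i) := by
  have h1 : conjD U g * A =
      U * (Matrix.diagonal (fun i => (g i : ℂ)) * (star U * A)) := by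
    unfold conjD; simp only [Matrix.mul_assoc]
  calc (conjD U g * A).trace
      = ((Matrix.diagonal (fun i => (g i : ℂ)) * (star U * A)) * U).trace := by
        rw [h1, Matrix.trace_mul_comm]
    _ = (Matrix.diagonal (fun i => (g i : ℂ)) * (star U * A * U)).trace := by
        simp only [Matrix.mul_assoc]
    _ = ∑ i, (g i : ℂ) * ((star U * A * U) i i) := trace_diagonal_mul' _ _

lemma trace_conjD_mul_re (U : Matrix (Fin N) (Fin N) ℂ) (g : Fin N → ℝ)
    (A : Matrix (Fin N) (Fin N) ℂ) :
    ((conjD U g * A).trace).re = ∑ i, g i * ((star U * A * U) i i).re := by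
  rw [trace_conjD_mul, Complex.re_sum]
  exact Finset.sum_congr rfl fun i _ => Complex.re_ofReal_mul _ _

lemma sum_diag_re (U : Matrix (Fin N) (Fin N) ℂ) (hU2 : U * star U = 1)
    (A : Matrix (Fin N) (Fin N) ℂ) :
    ∑ i, ((star U * A * U) i i).re = (A.trace).re := by
  have h := trace_conjD_mul_re U (fun _ => 1) A
  rw [conjD_one U hU2, one_mul] at h
  simpa using h.symm

lemma trace_conjD (U : Matrix (Fin N) (Fin N) ℂ) (hU1 : star U * U = 1) (g : Fin N → ℝ) :
    (conjD U g).trace = ∑ i, (g i : ℂ) := by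
  have h := trace_conjD_mul U g 1
  rw [mul_one] at h
  rw [h]
  refine Finset.sum_congr rfl fun i _ => ?_
  rw [mul_one, hU1]
  simp [Matrix.one_apply]

lemma eigenvectorUnitary_star_mul {M : Matrix (Fin N) (Fin N) ℂ} (hM : M.IsHermitian) :
    star (hM.eigenvectorUnitary : Matrix (Fin N) (Fin N) ℂ) *
      (hM.eigenvectorUnitary : Matrix (Fin N) (Fin N) ℂ) = 1 :=
  Matrix.mem_unitaryGroup_iff'.mp hM.eigenvectorUnitary.2

lemma eigenvectorUnitary_mul_star {M : Matrix (Fin N) (Fin N) ℂ} (hM : M.IsHermitian) :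
    (hM.eigenvectorUnitary : Matrix (Fin N) (Fin N) ℂ) *
      star (hM.eigenvectorUnitary : Matrix (Fin N) (Fin N) ℂ) = 1 :=
  Matrix.mem_unitaryGroup_iff.mp hM.eigenvectorUnitary.2

lemma spectral_conjD {M : Matrix (Fin N) (Fin N) ℂ} (hM : M.IsHermitian) :
    M = conjD (hM.eigenvectorUnitary : Matrix (Fin N) (Fin N) ℂ) hM.eigenvalues := by
  unfold conjD
  have h := hM.spectral_theorem
  simpa [Function.comp_def] using h

lemma star_mul_mul_diag {M : Matrix (Fin N) (Fin N) ℂ} (hM : M.IsHermitian) (i : Fin N) :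
    ((star (hM.eigenvectorUnitary : Matrix (Fin N) (Fin N) ℂ) * M *
      (hM.eigenvectorUnitary : Matrix (Fin N) (Fin N) ℂ)) i i).re = hM.eigenvalues i := by
  have h := hM.conjStarAlgAut_star_eigenvectorUnitary
  simp only [Unitary.conjStarAlgAut_star_apply, Unitary.conjStarAlgAut_apply, Unitary.coe_star,
    star_star] at h
  rw [h]
  simp [Matrix.diagonal_apply_eq, Function.comp]

lemma cfc_trace_re {M : Matrix (Fin N) (Fin N) ℂ} (hM : M.IsHermitian) (f : ℝ → ℝ) :
    ((cfc f M).trace).re = ∑ i, f (hM.eigenvalues i) := by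
  rw [hM.cfc_eq]
  unfold Matrix.IsHermitian.cfc
  rw [Unitary.conjStarAlgAut_apply, Matrix.trace_mul_cycle, eigenvectorUnitary_star_mul hM, one_mul, Matrix.trace_diagonal,
    Complex.re_sum]
  simp [Function.comp]

/-- Peierls' inequality for a concave function. -/
lemma peierls (U : Matrix (Fin N) (Fin N) ℂ) (hU1 : star U * U = 1) (hU2 : U * star U = 1)
    {M : Matrix (Fin N) (Fin N) ℂ} (hM : M.PosSemidef) {f : ℝ → ℝ}
    (hf : ConcaveOn ℝ (Set.Ici 0) f) :
    ∑ j, f (hM.1.eigenvalues j) ≤ ∑ i, f (((star U * M * U) i i).re) := by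
  set V : Matrix (Fin N) (Fin N) ℂ := (hM.1.eigenvectorUnitary : Matrix (Fin N) (Fin N) ℂ)
    with hV
  set ν := hM.1.eigenvalues with hν
  have hV1 : star V * V = 1 := eigenvectorUnitary_star_mul hM.1
  have hV2 : V * star V = 1 := eigenvectorUnitary_mul_star hM.1
  set W : Matrix (Fin N) (Fin N) ℂ := star U * V with hW
  set w : Fin N → Fin N → ℝ := fun i j => Complex.normSq (W i j) with hw
  have hW1 : W * star W = 1 := by
    rw [hW, Matrix.star_mul, star_star]
    calc star U * V * (star V * U) = star U * (V * star V) * U := by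
          simp only [Matrix.mul_assoc]
      _ = 1 := by rw [hV2, mul_one, hU1]
  have hW2 : star W * W = 1 := by
    rw [hW, Matrix.star_mul, star_star]
    calc star V * U * (star U * V) = star V * (U * star U) * V := by
          simp only [Matrix.mul_assoc]
      _ = 1 := by rw [hU2, mul_one, hV1]
  have hrow : ∀ i, ∑ j, w i j = 1 := by
    intro i
    have h1 : (W * star W) i i = 1 := by rw [hW1]; simp [Matrix.one_apply]
    have h2 : (W * star W) i i = ∑ j, ((w i j : ℝ) : ℂ) := by
      rw [Matrix.mul_apply]
      refine Finset.sum_congr rfl fun j _ => ?_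
      rw [Matrix.star_apply, hw]
      simpa using (Complex.mul_conj (W i j))
    rw [h2] at h1
    have := congrArg Complex.re h1
    rw [Complex.re_sum] at this
    simpa using this
  have hcol : ∀ j, ∑ i, w i j = 1 := by
    intro j
    have h1 : (star W * W) j j = 1 := by rw [hW2]; simp [Matrix.one_apply]
    have h2 : (star W * W) j j = ∑ i, ((w i j : ℝ) : ℂ) := by
      rw [Matrix.mul_apply]
      refine Finset.sum_congr rfl fun i _ => ?_
      rw [Matrix.star_apply, hw]
      rw [mul_comm]
      simpa using (Complex.mul_conj (W i j))
    rw [h2] at h1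
    have := congrArg Complex.re h1
    rw [Complex.re_sum] at this
    simpa using this
  have hentry : ∀ i, ((star U * M * U) i i).re = ∑ j, w i j * ν j := by
    intro i
    have hM' : star U * M * U = W * Matrix.diagonal (fun j => (ν j : ℂ)) * star W := by
      rw [hW]
      rw [Matrix.star_mul, star_star]
      conv_lhs => rw [spectral_conjD hM.1]
      unfold conjD
      simp only [Matrix.mul_assoc, ← hV, ← hν]
    rw [hM', Matrix.mul_apply]
    have hterm : ∀ j, (W * Matrix.diagonal fun k => ((ν k : ℝ) : ℂ)) i j * (star W) j i
        = ((w i j * ν j : ℝ) : ℂ) := by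
      intro j
      rw [Matrix.mul_diagonal, Matrix.star_apply, hw]
      rw [mul_comm (W i j) ((ν j : ℂ)), mul_assoc, Complex.star_def, Complex.mul_conj]
      push_cast
      ring
    rw [Finset.sum_congr rfl fun j _ => hterm j, Complex.re_sum]
    exact Finset.sum_congr rfl fun j _ => Complex.ofReal_re _
  have hνmem : ∀ j, ν j ∈ Set.Ici (0 : ℝ) := fun j => hM.eigenvalues_nonneg j
  calc ∑ j, f (ν j) = ∑ j, (∑ i, w i j) * f (ν j) := by
        refine Finset.sum_congr rfl fun j _ => ?_
        rw [hcol j, one_mul]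
    _ = ∑ i, ∑ j, w i j * f (ν j) := by
        rw [Finset.sum_comm]
        exact Finset.sum_congr rfl fun j _ => Finset.sum_mul _ _ _
    _ ≤ ∑ i, f (∑ j, w i j * ν j) := by
        refine Finset.sum_le_sum fun i _ => ?_
        have := hf.le_map_sum (t := Finset.univ) (w := w i) (p := ν)
          (fun j _ => Complex.normSq_nonneg _) (hrow i) (fun j _ => hνmem j)
        simpa [smul_eq_mul] using this
    _ = ∑ i, f (((star U * M * U) i i).re) := by
        refine Finset.sum_congr rfl fun i _ => ?_
        rw [hentry i]

lemma posSemidef_diag_re_nonneg' {M : Matrix (Fin N) (Fin N) ℂ} (hM : M.PosSemidef) (i : Fin N) :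
    0 ≤ (M i i).re := by
  have hstar : star (Pi.single i 1 : Fin N → ℂ) = Pi.single i 1 := by
    ext j; by_cases h : j = i <;> simp [Pi.single_apply, h]
  have h := hM.dotProduct_mulVec_nonneg (Pi.single i 1)
  rw [hstar] at h
  have heq : dotProduct (Pi.single i 1) (M *ᵥ (Pi.single i 1 : Fin N → ℂ)) = M i i := by
    simp [dotProduct, Matrix.mulVec_single, Pi.single_apply, ite_mul,
      Finset.sum_ite_eq' Finset.univ i]
  rw [heq] at h
  simpa using (Complex.le_def.mp h).1

lemma trace_re_nonneg {M : Matrix (Fin N) (Fin N) ℂ} (hM : M.PosSemidef) :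
    0 ≤ (M.trace).re := by
  rw [Matrix.trace, Complex.re_sum]
  exact Finset.sum_nonneg fun i _ => posSemidef_diag_re_nonneg' hM i

open scoped MatrixOrder in
lemma trace_mul_re_nonneg {X A : Matrix (Fin N) (Fin N) ℂ} (hX : X.PosSemidef)
    (hA : A.PosSemidef) : 0 ≤ ((X * A).trace).re := by
  set R := CFC.sqrt A with hR
  have hRH : Rᴴ = R := (CFC.sqrt_nonneg A).posSemidef.1
  have h1 : X * A = X * R * R := by rw [Matrix.mul_assoc, hR, CFC.sqrt_mul_sqrt_self A hA.nonneg]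
  have h2 : ((X * R) * R).trace = (R * (X * R)).trace := Matrix.trace_mul_comm _ _
  have h3 : (R * X * R).PosSemidef := by
    have := hX.mul_mul_conjTranspose_same R
    rwa [hRH] at this
  rw [h1, h2, ← Matrix.mul_assoc]
  exact trace_re_nonneg h3

/-- posdef of PSD + positive multiple of identity -/
lemma posDef_add_smul_one {A : Matrix (Fin N) (Fin N) ℂ} (hA : A.PosSemidef) {s : ℝ}
    (hs : 0 < s) (hN : True) : (A + (s : ℂ) • 1).PosDef := by
  refine Matrix.PosDef.of_dotProduct_mulVec_pos ?_ ?_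
  · refine hA.1.add ?_
    unfold Matrix.IsHermitian
    rw [Matrix.conjTranspose_smul, Matrix.conjTranspose_one]
    congr 1
    simp [Complex.star_def, Complex.conj_ofReal]
  · intro x hx
    have h1 : (A + (s : ℂ) • 1) *ᵥ x = A *ᵥ x + (s : ℂ) • x := by
      rw [Matrix.add_mulVec, Matrix.smul_mulVec, Matrix.one_mulVec]
    rw [h1, dotProduct_add]
    have h2 : (0 : ℂ) < star x ⬝ᵥ ((s : ℂ) • x) := by
      rw [dotProduct_smul]
      have hpos : (0 : ℂ) < star x ⬝ᵥ x := by
        rw [dotProduct_star_self_pos_iff]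
        exact hx
      have : (0:ℂ) < (s:ℂ) := by
        rw [Complex.zero_lt_real]
        exact hs
      calc (0:ℂ) = (s:ℂ) • (0:ℂ) := by simp
        _ < (s:ℂ) • (star x ⬝ᵥ x) := by
            rw [smul_eq_mul, smul_eq_mul, mul_zero]
            exact mul_pos this hpos
    calc (0:ℂ) = 0 + 0 := by simp
      _ < star x ⬝ᵥ (A *ᵥ x) + star x ⬝ᵥ ((s : ℂ) • x) :=
          add_lt_add_of_le_of_lt (hA.dotProduct_mulVec_nonneg x) h2

/-- inverse is antitone on positive definite matrices -/
lemma inv_sub_inv_posSemidef {X Y : Matrix (Fin N) (Fin N) ℂ} (hX : X.PosDef) (hY : Y.PosDef)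
    (hXY : (Y - X).PosSemidef) : (X⁻¹ - Y⁻¹).PosSemidef := by
  have hXu : IsUnit X.det := isUnit_iff_ne_zero.mpr (ne_of_gt hX.det_pos)
  have hYu : IsUnit Y.det := isUnit_iff_ne_zero.mpr (ne_of_gt hY.det_pos)
  have hXinv : X⁻¹.PosDef := hX.inv
  have hYinv : Y⁻¹.PosDef := hY.inv
  refine Matrix.PosSemidef.of_dotProduct_mulVec_nonneg ?_ ?_
  · exact hXinv.1.sub hYinv.1
  · intro v
    set u := X⁻¹ *ᵥ v with hu
    set w := Y⁻¹ *ᵥ v with hw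
    have hXu' : X *ᵥ u = v := by
      rw [hu, Matrix.mulVec_mulVec, Matrix.mul_nonsing_inv _ hXu, Matrix.one_mulVec]
    have hYw : Y *ᵥ w = v := by
      rw [hw, Matrix.mulVec_mulVec, Matrix.mul_nonsing_inv _ hYu, Matrix.one_mulVec]
    have hXherm : Xᴴ = X := hX.1
    have hYherm : Yᴴ = Y := hY.1
    have hvX : star u ᵥ* X = star v := by
      have h := Matrix.star_mulVec X u
      rw [hXu', hXherm] at h
      exact h.symm
    have key1 : star u ⬝ᵥ (X *ᵥ w) = star v ⬝ᵥ w := by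
      rw [Matrix.dotProduct_mulVec, hvX]
    have key2 : star v ⬝ᵥ u = star u ⬝ᵥ v := by
      rw [← hvX, ← Matrix.dotProduct_mulVec, hXu']
    have expandR : star (u - w) ⬝ᵥ (X *ᵥ (u - w)) + star w ⬝ᵥ ((Y - X) *ᵥ w)
        = star u ⬝ᵥ v - star v ⬝ᵥ w := by
      rw [Matrix.mulVec_sub, Matrix.sub_mulVec, star_sub]
      rw [sub_dotProduct, dotProduct_sub, dotProduct_sub,
        dotProduct_sub]
      rw [hXu', hYw, key1]
      ring
    rw [Matrix.sub_mulVec, dotProduct_sub, key2, ← expandR]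
    exact add_nonneg (hX.posSemidef.dotProduct_mulVec_nonneg _) (hXY.dotProduct_mulVec_nonneg _)


lemma half_mccarthy {q : ℝ} (hq0 : 0 < q) (hq1 : q ≤ 1) {A S : Matrix (Fin N) (Fin N) ℂ}
    (hA : A.PosSemidef) (hS : S.PosSemidef) (hAS : (S - A).PosSemidef) :
    ∑ i, (hS.1.eigenvalues i) ^ (q - 1) *
        ((star (hS.1.eigenvectorUnitary : Matrix (Fin N) (Fin N) ℂ) * A *
          (hS.1.eigenvectorUnitary : Matrix (Fin N) (Fin N) ℂ)) i i).re
      ≤ ∑ j, (hA.1.eigenvalues j) ^ q := by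
  set U : Matrix (Fin N) (Fin N) ℂ := (hS.1.eigenvectorUnitary : Matrix (Fin N) (Fin N) ℂ)
    with hUdef
  have hU1 : star U * U = 1 := eigenvectorUnitary_star_mul hS.1
  have hU2 : U * star U = 1 := eigenvectorUnitary_mul_star hS.1
  set V : Matrix (Fin N) (Fin N) ℂ := (hA.1.eigenvectorUnitary : Matrix (Fin N) (Fin N) ℂ)
    with hVdef
  have hV1 : star V * V = 1 := eigenvectorUnitary_star_mul hA.1
  have hV2 : V * star V = 1 := eigenvectorUnitary_mul_star hA.1
  set μ := hS.1.eigenvalues with hμdef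
  set α := hA.1.eigenvalues with hαdef
  set aE : Fin N → ℝ := fun i => ((star U * A * U) i i).re with haE
  have hμ0 : ∀ i, 0 ≤ μ i := fun i => hS.eigenvalues_nonneg i
  have hα0 : ∀ j, 0 ≤ α j := fun j => hA.eigenvalues_nonneg j
  have hconjA : (star U * A * U).PosSemidef := by
    have := hA.conjTranspose_mul_mul_same U
    rwa [← Matrix.star_eq_conjTranspose] at this
  have haE0 : ∀ i, 0 ≤ aE i := fun i => posSemidef_diag_re_nonneg' hconjA i
  have haEμ : ∀ i, aE i ≤ μ i := by
    intro i
    have hpsd : (star U * (S - A) * U).PosSemidef := by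
      have := hAS.conjTranspose_mul_mul_same U
      rwa [← Matrix.star_eq_conjTranspose] at this
    have h1 : ((star U * (S - A) * U) i i).re = μ i - aE i := by
      rw [Matrix.mul_sub, Matrix.sub_mul, Matrix.sub_apply, Complex.sub_re]
      rw [star_mul_mul_diag hS.1 i]
    have h2 := posSemidef_diag_re_nonneg' hpsd i
    linarith
  have htr : ∑ i, aE i = ∑ j, α j := by
    have h1 : ∑ i, aE i = (A.trace).re := sum_diag_re U hU2 A
    have h2 : (A.trace).re = ∑ j, α j := by
      conv_lhs => rw [spectral_conjD hA.1, ← hVdef, ← hαdef]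
      rw [trace_conjD V hV1, Complex.re_sum]
      simp
    rw [h1, h2]
  have hres : ∀ s : ℝ, 0 < s → ∑ i, aE i / (μ i + s) ≤ ∑ j, α j / (α j + s) := by
    intro s hs
    set X := A + (s : ℂ) • 1 with hXdef
    set Y := S + (s : ℂ) • 1 with hYdef
    have hXpd : X.PosDef := posDef_add_smul_one hA hs trivial
    have hYpd : Y.PosDef := posDef_add_smul_one hS hs trivial
    have hYX : (Y - X).PosSemidef := by
      have h : Y - X = S - A := by rw [hXdef, hYdef]; abel
      rw [h]; exact hAS
    have hXinv : X⁻¹ = conjD V (fun j => (α j + s)⁻¹) := by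
      apply Matrix.inv_eq_left_inv
      have hXc : X = conjD V (fun j => α j + s) := by
        rw [hXdef]
        conv_lhs => rw [spectral_conjD hA.1, ← hVdef, ← hαdef]
        rw [← conjD_smul_one V hV2 s, ← conjD_add]
      rw [hXc, conjD_mul V hV1]
      have he : (fun j => (α j + s)⁻¹ * (α j + s)) = fun _ : Fin N => 1 := by
        funext j
        have : 0 < α j + s := by have := hα0 j; linarith
        rw [inv_mul_cancel₀ this.ne']
      rw [he, conjD_one V hV2]
    have hYinv : Y⁻¹ = conjD U (fun i => (μ i + s)⁻¹) := by
      apply Matrix.inv_eq_left_inv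
      have hYc : Y = conjD U (fun i => μ i + s) := by
        rw [hYdef]
        conv_lhs => rw [spectral_conjD hS.1, ← hUdef, ← hμdef]
        rw [← conjD_smul_one U hU2 s, ← conjD_add]
      rw [hYc, conjD_mul U hU1]
      have he : (fun i => (μ i + s)⁻¹ * (μ i + s)) = fun _ : Fin N => 1 := by
        funext i
        have : 0 < μ i + s := by have := hμ0 i; linarith
        rw [inv_mul_cancel₀ this.ne']
      rw [he, conjD_one U hU2]
    have hLHS : ((Y⁻¹ * A).trace).re = ∑ i, aE i / (μ i + s) := by
      rw [hYinv, trace_conjD_mul_re]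
      refine Finset.sum_congr rfl fun i _ => ?_
      rw [haE]
      rw [div_eq_inv_mul]
    have hRHS : ((X⁻¹ * A).trace).re = ∑ j, α j / (α j + s) := by
      rw [hXinv]
      conv_lhs => rw [spectral_conjD hA.1, ← hVdef, ← hαdef]
      rw [conjD_mul V hV1, trace_conjD V hV1, Complex.re_sum]
      refine Finset.sum_congr rfl fun j _ => ?_
      rw [Complex.ofReal_re, div_eq_inv_mul]
    have hdiff : 0 ≤ (((X⁻¹ - Y⁻¹) * A).trace).re :=
      trace_mul_re_nonneg (inv_sub_inv_posSemidef hXpd hYpd hYX) hA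
    rw [Matrix.sub_mul, Matrix.trace_sub, Complex.sub_re] at hdiff
    linarith
  exact key_scalar hq0 hq1 μ aE α hμ0 haE0 haEμ hα0 htr hres

lemma main_ineq {q : ℝ} (hq0 : 0 < q) (hq1 : q ≤ 1) {A B C₁ C₂ : Matrix (Fin N) (Fin N) ℂ}
    (hA : A.PosSemidef) (hB : B.PosSemidef) (hC₁ : C₁.PosSemidef) (hC₂ : C₂.PosSemidef)
    (hsum : C₁ + C₂ = (A + B) + (A + B)) :
    (∑ j, (hC₁.1.eigenvalues j) ^ q + ∑ j, (hC₂.1.eigenvalues j) ^ q) / 2 ≤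
      ∑ j, (hA.1.eigenvalues j) ^ q + ∑ j, (hB.1.eigenvalues j) ^ q := by
  have hf : ConcaveOn ℝ (Set.Ici 0) (fun t : ℝ => t ^ q) := Real.concaveOn_rpow hq0.le hq1
  have hS : (A + B).PosSemidef := hA.add hB
  set U : Matrix (Fin N) (Fin N) ℂ := (hS.1.eigenvectorUnitary : Matrix (Fin N) (Fin N) ℂ)
    with hUdef
  have hU1 : star U * U = 1 := eigenvectorUnitary_star_mul hS.1
  have hU2 : U * star U = 1 := eigenvectorUnitary_mul_star hS.1
  set μ := hS.1.eigenvalues with hμdef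
  set aE : Fin N → ℝ := fun i => ((star U * A * U) i i).re with haE
  set bE : Fin N → ℝ := fun i => ((star U * B * U) i i).re with hbE
  set cE : Fin N → ℝ := fun i => ((star U * C₁ * U) i i).re with hcE
  set dE : Fin N → ℝ := fun i => ((star U * C₂ * U) i i).re with hdE
  have hμ0 : ∀ i, 0 ≤ μ i := fun i => hS.eigenvalues_nonneg i
  have hpsd : ∀ {M : Matrix (Fin N) (Fin N) ℂ}, M.PosSemidef → (star U * M * U).PosSemidef := by
    intro M hM
    have := hM.conjTranspose_mul_mul_same U
    rwa [← Matrix.star_eq_conjTranspose] at this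
  have hcE0 : ∀ i, 0 ≤ cE i := fun i => posSemidef_diag_re_nonneg' (hpsd hC₁) i
  have hdE0 : ∀ i, 0 ≤ dE i := fun i => posSemidef_diag_re_nonneg' (hpsd hC₂) i
  have hcd : ∀ i, cE i + dE i = 2 * μ i := by
    intro i
    have h1 := congrArg (fun M => ((star U * M * U) i i).re) hsum
    simp only [Matrix.mul_add, Matrix.add_mul, Matrix.add_apply, Complex.add_re] at h1
    have h2 : ((star U * (A + B) * U) i i).re = μ i := star_mul_mul_diag hS.1 i
    rw [Matrix.mul_add, Matrix.add_mul] at h2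
    simp only [Matrix.add_apply, Complex.add_re] at h2
    rw [hcE, hdE]
    simp only [Matrix.mul_add, Matrix.add_mul, Matrix.add_apply, Complex.add_re]
    linarith
  have hab : ∀ i, aE i + bE i = μ i := by
    intro i
    have h2 : ((star U * (A + B) * U) i i).re = μ i := star_mul_mul_diag hS.1 i
    rw [Matrix.mul_add, Matrix.add_mul] at h2
    simp only [Matrix.add_apply, Complex.add_re] at h2
    rw [haE, hbE]
    exact h2
  have step1 : ∑ j, (hC₁.1.eigenvalues j) ^ q ≤ ∑ i, (cE i) ^ q :=
    peierls U hU1 hU2 hC₁ hf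
  have step2 : ∑ j, (hC₂.1.eigenvalues j) ^ q ≤ ∑ i, (dE i) ^ q :=
    peierls U hU1 hU2 hC₂ hf
  have step3 : ∀ i, ((cE i) ^ q + (dE i) ^ q) / 2 ≤ (μ i) ^ q := by
    intro i
    have h := hf.2 (Set.mem_Ici.mpr (hcE0 i)) (Set.mem_Ici.mpr (hdE0 i))
      (by norm_num : (0:ℝ) ≤ 1/2) (by norm_num : (0:ℝ) ≤ 1/2) (by norm_num)
    simp only [smul_eq_mul] at h
    have harg : (1/2 : ℝ) * cE i + (1/2 : ℝ) * dE i = μ i := by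
      have := hcd i; linarith
    rw [harg] at h
    linarith
  have step4 : ∑ i, (μ i) ^ q = ∑ i, (μ i) ^ (q-1) * aE i + ∑ i, (μ i) ^ (q-1) * bE i := by
    rw [← Finset.sum_add_distrib]
    refine Finset.sum_congr rfl fun i _ => ?_
    rw [← mul_add, hab i, rpow_sub_one_mul (hμ0 i) hq0.ne']
  have step5a : ∑ i, (μ i) ^ (q-1) * aE i ≤ ∑ j, (hA.1.eigenvalues j) ^ q := by
    have hsub : ((A + B) - A).PosSemidef := by
      have h : (A + B) - A = B := by abel
      rw [h]; exact hB
    exact half_mccarthy hq0 hq1 hA hS hsub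
  have step5b : ∑ i, (μ i) ^ (q-1) * bE i ≤ ∑ j, (hB.1.eigenvalues j) ^ q := by
    have hsub : ((A + B) - B).PosSemidef := by
      have h : (A + B) - B = A := by abel
      rw [h]; exact hA
    exact half_mccarthy hq0 hq1 hB hS hsub
  have mid : (∑ i, (cE i) ^ q + ∑ i, (dE i) ^ q) / 2 ≤ ∑ i, (μ i) ^ q := by
    rw [← Finset.sum_add_distrib, Finset.sum_div]
    exact Finset.sum_le_sum fun i _ => step3 i
  have := step4 ▸ mid
  linarith

end SchattenClarksonAux

open SchattenClarksonAux in
open scoped ComplexOrder in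
/-- The Clarkson-type inequality for Schatten `p`-classes, `1 ≤ p ≤ 2`:
`(‖a - b‖_p^p + ‖a + b‖_p^p)/2 ≤ ‖a‖_p^p + ‖b‖_p^p`. -/
theorem schatten_clarkson {N : ℕ} (hN : 1 ≤ N) (p : ℝ) (hp₁ : 1 ≤ p) (hp₂ : p ≤ 2)
    (a b : Matrix (Fin N) (Fin N) ℂ) :
    (schattenPowP p (a - b) + schattenPowP p (a + b)) / 2 ≤
      schattenPowP p a + schattenPowP p b := by
  have hq0 : 0 < p / 2 := by linarith
  have hq1 : p / 2 ≤ 1 := by linarith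
  have hA : (aᴴ * a).PosSemidef := Matrix.posSemidef_conjTranspose_mul_self a
  have hB : (bᴴ * b).PosSemidef := Matrix.posSemidef_conjTranspose_mul_self b
  have hC₁ : ((a - b)ᴴ * (a - b)).PosSemidef := Matrix.posSemidef_conjTranspose_mul_self (a - b)
  have hC₂ : ((a + b)ᴴ * (a + b)).PosSemidef := Matrix.posSemidef_conjTranspose_mul_self (a + b)
  have hsum : (a - b)ᴴ * (a - b) + (a + b)ᴴ * (a + b) = (aᴴ * a + bᴴ * b) + (aᴴ * a + bᴴ * b) := by
    rw [Matrix.conjTranspose_sub, Matrix.conjTranspose_add]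
    noncomm_ring
  have e1 : schattenPowP p (a - b) = ∑ j, (hC₁.1.eigenvalues j) ^ (p / 2) := by
    unfold schattenPowP
    exact cfc_trace_re hC₁.1 _
  have e2 : schattenPowP p (a + b) = ∑ j, (hC₂.1.eigenvalues j) ^ (p / 2) := by
    unfold schattenPowP
    exact cfc_trace_re hC₂.1 _
  have e3 : schattenPowP p a = ∑ j, (hA.1.eigenvalues j) ^ (p / 2) := by
    unfold schattenPowP
    exact cfc_trace_re hA.1 _
  have e4 : schattenPowP p b = ∑ j, (hB.1.eigenvalues j) ^ (p / 2) := by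
    unfold schattenPowP
    exact cfc_trace_re hB.1 _
  rw [e1, e2, e3, e4]
  exact main_ineq hq0 hq1 hA hB hC₁ hC₂ hsum
end

section
/- Let n ≥ 1, let S be a Hermitian complex n×n matrix, and let ε : {1,…,n} → ℂ satisfy |ε_i| = 1 for all i. Let E_{ii} denote the matrix unit with 1 in entry (i,i) and 0 elsewhere, and put y = Σ_i ε_i · E_{ii} S. Then yᴴ y = S², and moreover Σ_i (E_{ii} S)(E_{ii} S)ᴴ equals the diagonal matrix whose i-th diagonal entry is (S²)_{ii}. -/
open Matrix

lemma aux_entry {n : ℕ} (S : Matrix (Fin n) (Fin n) ℂ) (i j l : Fin n) :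
    (single i i (1 : ℂ) * S) j l = if i = j then S i l else 0 := by
  simp [mul_apply, Matrix.single, ite_and]

lemma aux_entryT {n : ℕ} (S : Matrix (Fin n) (Fin n) ℂ) (i j l : Fin n) :
    (single i i (1 : ℂ) * S)ᴴ j l = if i = l then star (S i j) else 0 := by
  rw [conjTranspose_apply, aux_entry]
  by_cases h : i = l <;> simp [h]

lemma aux_sum {n : ℕ} (S : Matrix (Fin n) (Fin n) ℂ) (ε : Fin n → ℂ) (x j : Fin n) :
    (∑ i, ε i • (single i i (1 : ℂ) * S)) x j = ε x * S x j := by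
  rw [Matrix.sum_apply, Finset.sum_eq_single x]
  · simp [aux_entry]
  · intro b _ hb; simp [aux_entry, hb]
  · simp

/-- For a Hermitian matrix `S` and unimodular scalars `ε_i`, the matrix
`y = Σ_i ε_i E_{ii} S` satisfies `yᴴ y = S²`, and `Σ_i (E_{ii} S)(E_{ii} S)ᴴ` is the
diagonal matrix with entries the diagonal of `S²`. -/
theorem schurHorn_row_column_computation {n : ℕ} (hn : 1 ≤ n)
    (S : Matrix (Fin n) (Fin n) ℂ) (hS : S.IsHermitian)
    (ε : Fin n → ℂ) (hε : ∀ i, ‖ε i‖ = 1) :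
    (∑ i, ε i • (single i i (1 : ℂ) * S))ᴴ *
        (∑ i, ε i • (single i i (1 : ℂ) * S)) = S * S ∧
      (∑ i, (single i i (1 : ℂ) * S) * (single i i (1 : ℂ) * S)ᴴ) =
        Matrix.diagonal (fun i => (S * S) i i) := by
  have hεε : ∀ i, (starRingEnd ℂ) (ε i) * ε i = 1 := by
    intro i
    have : Complex.normSq (ε i) = 1 := by
      rw [← Complex.sq_norm, hε]; norm_num
    rw [mul_comm, Complex.mul_conj, this, Complex.ofReal_one]
  have hSconj : ∀ a b : Fin n, (starRingEnd ℂ) (S a b) = S b a := by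
    intro a b
    conv_rhs => rw [← hS]
    simp [conjTranspose_apply]
  constructor
  · ext j k
    rw [mul_apply, mul_apply]
    apply Finset.sum_congr rfl
    intro x _
    rw [conjTranspose_apply, aux_sum, aux_sum]
    calc star (ε x * S x j) * (ε x * S x k)
        = ((starRingEnd ℂ) (ε x) * ε x) * ((starRingEnd ℂ) (S x j) * S x k) := by
          simp only [star_mul', Complex.star_def]; ring
      _ = S j x * S x k := by rw [hεε, hSconj]; ring
  · have haux : ∀ i j k : Fin n,
        ((single i i (1 : ℂ) * S) * (single i i (1 : ℂ) * S)ᴴ) j k =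
          if i = j ∧ i = k then ∑ l, S i l * star (S i l) else 0 := by
      intro i j k
      rw [mul_apply]
      simp only [aux_entry, aux_entryT]
      by_cases hij : i = j
      · by_cases hik : i = k
        · simp [hij, hik]
        · simp [hij, hik]
      · simp [hij]
    ext j k
    simp only [Matrix.sum_apply, haux, diagonal_apply]
    by_cases hjk : j = k
    · subst hjk
      simp only [if_pos rfl]
      rw [Finset.sum_eq_single j]
      · rw [if_pos ⟨rfl, rfl⟩, mul_apply]
        apply Finset.sum_congr rfl
        intro l _
        rw [RCLike.star_def, hSconj, mul_comm]
      · intro b _ hb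
        simp [hb]
      · simp
    · simp only [if_neg hjk]
      apply Finset.sum_eq_zero
      intro i _
      by_cases hij : i = j
      · subst hij; simp [hjk]
      · simp [hij]
end
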